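/- arXiv:2005.06890 — 2 statements merged into one kernel-verified Lean document; each statement's English description precedes it below -/
import Mathlib

section
/- Let E be a nondegenerate closed segment in ℝ with endpoints a < b, and let k ≥ 0 be an integer. For any real values r_a, r_b and any polynomial r_E of degree ≤ k−1 on E (with the convention that polynomials of degree ≤ −1 are zero), there exists a unique polynomial γ ∈ ℙ^{k+1}(E) such that γ(a) = r_a, γ(b) = r_b, and the L²(E)-orthogonal projection of γ onto ℙ^{k−1}(E) equals r_E. -/
/- STATEMENT 1: On a segment E = [a,b] with a < b and k ≥ 0, given endpoint
values r_a, r_b and a polynomial r_E of degree ≤ k−1 (i.e. degree < k), there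
is a unique polynomial γ of degree ≤ k+1 (i.e. degree < k+2) with γ(a)=r_a,
γ(b)=r_b and L²(E)-projection on ℙ^{k−1}(E) equal to r_E, the latter being
characterized by ∫_a^b (γ − r_E) q = 0 for all q of degree ≤ k−1. -/

open Polynomial intervalIntegral
open MeasureTheory Module
lemma polyMulIntg (a b : ℝ) (p q : Polynomial ℝ) :
    IntervalIntegrable (fun x => p.eval x * q.eval x) volume a b :=
  (p.continuous.mul q.continuous).intervalIntegrable a b

noncomputable def polyB (a b : ℝ) : Polynomial ℝ →ₗ[ℝ] Polynomial ℝ →ₗ[ℝ] ℝ :=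
  LinearMap.mk₂ ℝ (fun p q => ∫ x in a..b, p.eval x * q.eval x)
    (fun p p' q => by
      rw [← integral_add (polyMulIntg a b p q) (polyMulIntg a b p' q)]
      simp [add_mul])
    (fun c p q => by
      rw [← intervalIntegral.integral_smul]
      simp [mul_assoc])
    (fun p q q' => by
      rw [← integral_add (polyMulIntg a b p q) (polyMulIntg a b p q')]
      simp [mul_add])
    (fun c p q => by
      rw [← intervalIntegral.integral_smul]
      simp [mul_left_comm])

@[simp] lemma polyB_apply (a b : ℝ) (p q : Polynomial ℝ) :
    polyB a b p q = ∫ x in a..b, p.eval x * q.eval x := rfl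

lemma key (k : ℕ) {a b : ℝ} (hab : a < b) {γ : Polynomial ℝ}
    (hγ : γ ∈ Polynomial.degreeLT ℝ (k + 2)) (ha : γ.eval a = 0) (hb : γ.eval b = 0)
    (hint : ∀ q ∈ Polynomial.degreeLT ℝ k, (∫ x in a..b, γ.eval x * q.eval x) = 0) :
    γ = 0 := by
  obtain ⟨γ1, hγ1⟩ : (X - C a) ∣ γ := dvd_iff_isRoot.2 ha
  have hb1 : γ1.eval b = 0 := by
    rw [hγ1] at hb
    simp only [eval_mul, eval_sub, eval_X, eval_C] at hb
    rcases mul_eq_zero.1 hb with h | h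
    · linarith
    · exact h
  obtain ⟨h, hh⟩ : (X - C b) ∣ γ1 := dvd_iff_isRoot.2 hb1
  rw [hh] at hγ1
  by_cases hz : h = 0
  · rw [hγ1, hz]; ring
  exfalso
  have hγne : γ ≠ 0 := by
    rw [hγ1]
    exact mul_ne_zero (X_sub_C_ne_zero a) (mul_ne_zero (X_sub_C_ne_zero b) hz)
  have hdeg : h ∈ Polynomial.degreeLT ℝ k := by
    rw [mem_degreeLT] at hγ ⊢
    rw [← natDegree_lt_iff_degree_lt hγne] at hγ
    rw [← natDegree_lt_iff_degree_lt hz]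
    rw [hγ1, natDegree_mul (X_sub_C_ne_zero a) (mul_ne_zero (X_sub_C_ne_zero b) hz),
      natDegree_mul (X_sub_C_ne_zero b) hz, natDegree_X_sub_C, natDegree_X_sub_C] at hγ
    omega
  have hint0 := hint h hdeg
  have hfun : ∀ x : ℝ, γ.eval x * h.eval x = -((x - a) * (b - x) * (h.eval x) ^ 2) := by
    intro x
    rw [hγ1]
    simp only [eval_mul, eval_sub, eval_X, eval_C]
    ring
  have hint1 : (∫ x in a..b, (x - a) * (b - x) * (h.eval x) ^ 2) = 0 := by
    have : (∫ x in a..b, -((x - a) * (b - x) * (h.eval x) ^ 2)) = 0 := by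
      rw [← hint0]; congr 1; ext x; rw [hfun x]
    rw [intervalIntegral.integral_neg] at this
    linarith
  obtain ⟨c, hc⟩ : ∃ c, c ∈ Set.Ioo a b \ {x | h.IsRoot x} :=
    ((Set.Ioo_infinite hab).diff (finite_setOf_isRoot hz)).nonempty
  have hpos : 0 < ∫ x in a..b, (x - a) * (b - x) * (h.eval x) ^ 2 := by
    apply intervalIntegral.integral_pos hab
    · exact (Continuous.continuousOn (by fun_prop))
    · intro x hx
      have : 0 ≤ b - x := by linarith [hx.2]
      have : 0 ≤ x - a := by linarith [hx.1]
      positivity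
    · refine ⟨c, ⟨le_of_lt hc.1.1, le_of_lt hc.1.2⟩, ?_⟩
      have h1 : 0 < c - a := by linarith [hc.1.1]
      have h2 : 0 < b - c := by linarith [hc.1.2]
      have h3 : h.eval c ≠ 0 := hc.2
      positivity
  linarith



theorem stmt1 (k : ℕ) (a b : ℝ) (hab : a < b) (ra rb : ℝ)
    (rE : Polynomial ℝ) (hrE : rE ∈ Polynomial.degreeLT ℝ k) :
    ∃! γ : Polynomial ℝ, γ ∈ Polynomial.degreeLT ℝ (k + 2) ∧
      γ.eval a = ra ∧ γ.eval b = rb ∧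
      ∀ q ∈ Polynomial.degreeLT ℝ k,
        (∫ x in a..b, (γ.eval x - rE.eval x) * q.eval x) = 0 := by
  haveI h1 : FiniteDimensional ℝ ↥(degreeLT ℝ (k + 2)) :=
    LinearEquiv.finiteDimensional (degreeLTEquiv ℝ (k + 2)).symm
  haveI h2 : FiniteDimensional ℝ ↥(degreeLT ℝ k) :=
    LinearEquiv.finiteDimensional (degreeLTEquiv ℝ k).symm
  have hf1 : finrank ℝ ↥(degreeLT ℝ (k + 2)) = k + 2 :=
    (degreeLTEquiv ℝ (k + 2)).finrank_eq.trans (Module.finrank_fin_fun ℝ)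
  have hf2 : finrank ℝ ↥(degreeLT ℝ k) = k :=
    (degreeLTEquiv ℝ k).finrank_eq.trans (Module.finrank_fin_fun ℝ)
  set L : ↥(degreeLT ℝ (k + 2)) →ₗ[ℝ] Module.Dual ℝ ↥(degreeLT ℝ k) :=
    (LinearMap.lcomp ℝ ℝ (Submodule.subtype (degreeLT ℝ k))) ∘ₗ (polyB a b) ∘ₗ
      (Submodule.subtype (degreeLT ℝ (k + 2))) with hL
  set T : ↥(degreeLT ℝ (k + 2)) →ₗ[ℝ] ℝ × ℝ × Module.Dual ℝ ↥(degreeLT ℝ k) :=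
    LinearMap.prod ((leval a) ∘ₗ Submodule.subtype _)
      (LinearMap.prod ((leval b) ∘ₗ Submodule.subtype _) L) with hT
  have hinj : Function.Injective T := by
    rw [← LinearMap.ker_eq_bot, LinearMap.ker_eq_bot']
    intro γ hγ0
    rw [hT] at hγ0
    simp only [LinearMap.prod_apply, Function.prod, LinearMap.comp_apply, Submodule.subtype_apply,
      leval_apply, Prod.mk_eq_zero] at hγ0
    obtain ⟨ea, eb, eL⟩ := hγ0
    have : (γ : Polynomial ℝ) = 0 := by
      apply key k hab γ.2 ea eb
      intro q hq
      have := congrFun (congrArg DFunLike.coe eL) ⟨q, hq⟩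
      simpa [hL] using this
    exact Subtype.ext this
  have hfr : finrank ℝ ↥(degreeLT ℝ (k + 2)) =
      finrank ℝ (ℝ × ℝ × Module.Dual ℝ ↥(degreeLT ℝ k)) := by
    rw [Module.finrank_prod, Module.finrank_prod, Subspace.dual_finrank_eq, hf1, hf2,
      Module.finrank_self]
    omega
  have hsurj : Function.Surjective T :=
    (LinearMap.injective_iff_surjective_of_finrank_eq_finrank hfr).mp hinj
  obtain ⟨γ', hγ'⟩ := hsurj (ra, rb, ((polyB a b rE).comp (Submodule.subtype (degreeLT ℝ k))))
  rw [hT] at hγ'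
  simp only [LinearMap.prod_apply, Function.prod, LinearMap.comp_apply, Submodule.subtype_apply,
    leval_apply, Prod.mk.injEq] at hγ'
  obtain ⟨ea, eb, eL⟩ := hγ'
  have hBcond : ∀ (p : Polynomial ℝ), (∀ q ∈ degreeLT ℝ k,
      (∫ x in a..b, (p.eval x - rE.eval x) * q.eval x) = 0) ↔
      (∀ q ∈ degreeLT ℝ k, polyB a b p q = polyB a b rE q) := by
    intro p
    have key2 : ∀ q : Polynomial ℝ, (∫ x in a..b, (p.eval x - rE.eval x) * q.eval x)
        = polyB a b p q - polyB a b rE q := by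
      intro q
      simp only [polyB_apply]
      rw [← intervalIntegral.integral_sub (polyMulIntg a b p q) (polyMulIntg a b rE q)]
      congr 1; ext x; ring
    constructor
    · intro H q hq; have := H q hq; rw [key2 q] at this; linarith
    · intro H q hq; rw [key2 q, H q hq]; ring
  refine ⟨γ'.1, ⟨γ'.2, ea, eb, ?_⟩, ?_⟩
  · rw [hBcond]
    intro q hq
    have := congrFun (congrArg DFunLike.coe eL) ⟨q, hq⟩
    simpa [hL] using this
  · rintro p ⟨hp, hpa, hpb, hpint⟩
    have hTeq : T ⟨p, hp⟩ = T γ' := by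
      rw [hT]
      simp only [LinearMap.prod_apply, Function.prod, LinearMap.comp_apply, Submodule.subtype_apply,
        leval_apply]
      refine Prod.ext ?_ (Prod.ext ?_ ?_)
      · simp [hpa, ea]
      · simp [hpb, eb]
      · ext q
        have h1 := (hBcond p).mp hpint q.1 q.2
        have h2 := congrFun (congrArg DFunLike.coe eL) q
        simp only [hL, LinearMap.comp_apply, LinearMap.lcomp_apply, Submodule.subtype_apply] at h2 ⊢
        rw [h1, h2]
    exact congrArg Subtype.val (hinj hTeq)
end

section
/- Let T ⊂ ℝ³ be a bounded open set of diameter 1 that contains a ball of radius ρ > 0 and is contained in the unit ball centered at the same point. For every integer ℓ ≥ 0 there exists a constant C, depending only on ℓ and ρ, such that for all r ∈ 𝒢^{ℓ+1}(T)^⊥ one has ‖r‖_{L²(T)³} ≤ C ‖curl r‖_{L²(T)³}. -/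
/- STATEMENT 3: For T ⊂ ℝ³ bounded open of diameter 1 with B(x₀,ρ) ⊆ T ⊆ B(x₀,1),
and ℓ ≥ 0, there is C = C(ℓ,ρ) such that ‖r‖_{L²(T)³} ≤ C ‖curl r‖_{L²(T)³}
for all r ∈ 𝒢^{ℓ+1}(T)^⊥ (the L²(T)³-orthogonal complement of
𝒢^{ℓ+1}(T) = grad ℙ^{ℓ+2}(T) in ℙ^{ℓ+1}(T)³). -/

noncomputable section
open MvPolynomial MeasureTheory

/-- ℙ^m: trivariate polynomials of total degree ≤ m. -/
abbrev P3 (m : ℕ) : Submodule ℝ (MvPolynomial (Fin 3) ℝ) :=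
  MvPolynomial.restrictTotalDegree (Fin 3) ℝ m

/-- Gradient of a scalar polynomial. -/
def pgrad (p : MvPolynomial (Fin 3) ℝ) : Fin 3 → MvPolynomial (Fin 3) ℝ :=
  fun i => pderiv i p

/-- Curl of a polynomial vector field. -/
def pcurl (v : Fin 3 → MvPolynomial (Fin 3) ℝ) : Fin 3 → MvPolynomial (Fin 3) ℝ :=
  fun i => pderiv (i + 1) (v (i + 2)) - pderiv (i + 2) (v (i + 1))

/-- 𝒢^m(T) = grad ℙ^{m+1}(T). -/
def Gspace (m : ℕ) : Set (Fin 3 → MvPolynomial (Fin 3) ℝ) :=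
  {v | ∃ p ∈ P3 (m + 1), v = pgrad p}

/-- 𝒢^m(T)^⊥: L²(T)³-orthogonal complement of 𝒢^m(T) in ℙ^m(T)³. -/
def GspacePerp (T : Set (EuclideanSpace ℝ (Fin 3))) (m : ℕ) :
    Set (Fin 3 → MvPolynomial (Fin 3) ℝ) :=
  {v | (∀ i, v i ∈ P3 m) ∧ ∀ w ∈ Gspace m,
    (∫ x in T, ∑ i, MvPolynomial.eval (fun j => x j) (v i) *
      MvPolynomial.eval (fun j => x j) (w i)) = 0}

/-- Squared L²(T)³ norm of a polynomial vector field. -/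
def sqL2 (T : Set (EuclideanSpace ℝ (Fin 3))) (v : Fin 3 → MvPolynomial (Fin 3) ℝ) : ℝ :=
  ∫ x in T, ∑ i, (MvPolynomial.eval (fun j => x j) (v i)) ^ 2


abbrev E3 := EuclideanSpace ℝ (Fin 3)
abbrev V3 := Fin 3 → MvPolynomial (Fin 3) ℝ

def evalE (p : MvPolynomial (Fin 3) ℝ) (x : E3) : ℝ := MvPolynomial.eval (fun j => x j) p

lemma evalE_C (a : ℝ) : evalE (C a) = fun _ => a := by funext x; simp [evalE]
lemma evalE_add (p q : MvPolynomial (Fin 3) ℝ) : evalE (p + q) = fun x => evalE p x + evalE q x := by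
  funext x; simp [evalE]
lemma evalE_mulX (p : MvPolynomial (Fin 3) ℝ) (i : Fin 3) :
    evalE (p * X i) = fun x => evalE p x * x i := by funext x; simp [evalE]

lemma continuous_evalE (p : MvPolynomial (Fin 3) ℝ) : Continuous (evalE p) := by
  induction p using MvPolynomial.induction_on with
  | C a => rw [evalE_C]; exact continuous_const
  | add p q hp hq => rw [evalE_add]; exact hp.add hq
  | mul_X p i hp =>
      rw [evalE_mulX]; exact hp.mul (EuclideanSpace.proj i).continuous

lemma analyticOnNhd_evalE (p : MvPolynomial (Fin 3) ℝ) :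
    AnalyticOnNhd ℝ (evalE p) Set.univ := by
  induction p using MvPolynomial.induction_on with
  | C a => rw [evalE_C]; exact analyticOnNhd_const
  | add p q hp hq => rw [evalE_add]; exact hp.add hq
  | mul_X p i hp =>
      rw [evalE_mulX]
      exact hp.mul ((EuclideanSpace.proj (𝕜 := ℝ) (i : Fin 3)).analyticOnNhd _)

lemma eq_zero_of_evalE_zero_on_open {p : MvPolynomial (Fin 3) ℝ} {U : Set E3}
    (hU : IsOpen U) (hne : U.Nonempty) (h : ∀ x ∈ U, evalE p x = 0) : p = 0 := by
  obtain ⟨x₀, hx₀⟩ := hne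
  have hz : Set.EqOn (evalE p) 0 Set.univ := by
    apply (analyticOnNhd_evalE p).eqOn_zero_of_preconnected_of_eventuallyEq_zero
      isPreconnected_univ (Set.mem_univ x₀)
    filter_upwards [hU.mem_nhds hx₀] with x hx using h x hx
  have : ∀ y : Fin 3 → ℝ, MvPolynomial.eval y p = MvPolynomial.eval y 0 := by
    intro y
    have := hz (Set.mem_univ ((EuclideanSpace.equiv (Fin 3) ℝ).symm y))
    simpa [evalE] using this
  exact MvPolynomial.funext this

lemma integrableOn_of_continuous {f : E3 → ℝ} (hf : Continuous f) {S : Set E3}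
    (hS : Bornology.IsBounded S) : IntegrableOn f S :=
  ((hf.continuousOn).integrableOn_compact hS.isCompact_closure).mono_set subset_closure

def ipf (v w : V3) (x : E3) : ℝ := ∑ i, evalE (v i) x * evalE (w i) x

lemma continuous_ipf (v w : V3) : Continuous (ipf v w) := by
  unfold ipf
  exact continuous_finset_sum _ fun i _ => (continuous_evalE _).mul (continuous_evalE _)

def ip (S : Set E3) (v w : V3) : ℝ := ∫ x in S, ipf v w x

lemma integrableOn_ipf (v w : V3) {S : Set E3} (hS : Bornology.IsBounded S) :
    IntegrableOn (ipf v w) S := integrableOn_of_continuous (continuous_ipf v w) hS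

lemma ip_symm (S : Set E3) (v w : V3) : ip S v w = ip S w v := by
  unfold ip ipf; congr 1; funext x; exact Finset.sum_congr rfl fun i _ => mul_comm _ _

lemma ip_add_left {S : Set E3} (hS : Bornology.IsBounded S) (u v w : V3) :
    ip S (u + v) w = ip S u w + ip S v w := by
  unfold ip
  rw [← integral_add (integrableOn_ipf u w hS) (integrableOn_ipf v w hS)]
  congr 1; funext x
  unfold ipf
  rw [← Finset.sum_add_distrib]
  refine Finset.sum_congr rfl fun i _ => ?_
  have : evalE ((u + v) i) x = evalE (u i) x + evalE (v i) x := by simp [evalE]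
  rw [this, add_mul]

lemma ip_smul_left (S : Set E3) (c : ℝ) (v w : V3) : ip S (c • v) w = c * ip S v w := by
  unfold ip
  rw [← smul_eq_mul, ← integral_smul (μ := volume.restrict S) c (ipf v w)]
  congr 1; funext x
  unfold ipf
  rw [smul_eq_mul, Finset.mul_sum]
  refine Finset.sum_congr rfl fun i _ => ?_
  have : evalE ((c • v) i) x = c * evalE (v i) x := by simp [evalE]
  rw [this, mul_assoc]

lemma ip_sub_left {S : Set E3} (hS : Bornology.IsBounded S) (u v w : V3) :
    ip S (u - v) w = ip S u w - ip S v w := by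
  have h := ip_add_left hS (u - v) v w
  rw [sub_add_cancel] at h; linarith

lemma ipf_diag_nonneg (v : V3) (x : E3) : 0 ≤ ipf v v x :=
  Finset.sum_nonneg fun i _ => mul_self_nonneg _

lemma ip_diag_nonneg {S : Set E3} (v : V3) : 0 ≤ ip S v v :=
  setIntegral_nonneg_of_ae_restrict (Filter.Eventually.of_forall fun x => ipf_diag_nonneg v x)

lemma ip_diag_pos {S : Set E3} (hSo : IsOpen S) (hSne : S.Nonempty)
    (hSb : Bornology.IsBounded S) {v : V3} (hv : v ≠ 0) : 0 < ip S v v := by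
  -- find a point where some component is nonzero
  have hvi : ∃ i, v i ≠ 0 := by
    by_contra h
    push_neg at h
    exact hv (funext h)
  obtain ⟨i, hi⟩ := hvi
  have hx : ∃ x ∈ S, evalE (v i) x ≠ 0 := by
    by_contra h
    push_neg at h
    exact hi (eq_zero_of_evalE_zero_on_open hSo hSne h)
  obtain ⟨x, hxS, hxne⟩ := hx
  have hpos : 0 < ipf v v x := by
    have : 0 < evalE (v i) x * evalE (v i) x := mul_self_pos.mpr hxne
    calc 0 < evalE (v i) x * evalE (v i) x := this
    _ ≤ ipf v v x := Finset.single_le_sum (f := fun j => evalE (v j) x * evalE (v j) x)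
        (fun j _ => mul_self_nonneg _) (Finset.mem_univ i)
  rw [ip]
  rw [setIntegral_pos_iff_support_of_nonneg_ae
    (Filter.Eventually.of_forall fun y => ipf_diag_nonneg v y) (integrableOn_ipf v v hSb)]
  have hU : IsOpen (S ∩ {y | 0 < ipf v v y}) :=
    hSo.inter (isOpen_lt continuous_const (continuous_ipf v v))
  have hUsub : S ∩ {y | 0 < ipf v v y} ⊆ Function.support (ipf v v) ∩ S :=
    fun y hy => ⟨ne_of_gt hy.2, hy.1⟩
  calc (0:ENNReal) < volume (S ∩ {y | 0 < ipf v v y}) :=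
        hU.measure_pos volume ⟨x, hxS, hpos⟩
  _ ≤ volume (Function.support (ipf v v) ∩ S) := measure_mono hUsub

lemma ip_diag_mono {S S' : Set E3} (hsub : S ⊆ S') (hS'b : Bornology.IsBounded S') (v : V3) :
    ip S v v ≤ ip S' v v :=
  setIntegral_mono_set (integrableOn_ipf v v hS'b)
    (Filter.Eventually.of_forall fun y => ipf_diag_nonneg v y)
    (HasSubset.Subset.eventuallyLE hsub)

lemma cauchy_schwarz_aux {B : V3 → V3 → ℝ} (hsymm : ∀ v w, B v w = B w v)
    (hadd : ∀ u v w, B (u + v) w = B u w + B v w)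
    (hsmul : ∀ (c : ℝ) (v w : V3), B (c • v) w = c * B v w)
    (hnn : ∀ v, 0 ≤ B v v) (v w : V3) : B v w ^ 2 ≤ B v v * B w w := by
  have haddr : ∀ u v w : V3, B u (v + w) = B u v + B u w := fun u v w => by
    rw [hsymm, hadd, hsymm v u, hsymm w u]
  have hsmulr : ∀ (c : ℝ) (v w : V3), B v (c • w) = c * B v w := fun c v w => by
    rw [hsymm, hsmul, hsymm]
  have key : ∀ t : ℝ, 0 ≤ B w w * (t * t) + (2 * B v w) * t + B v v := by
    intro t
    have h0 : B (v + t • w) (v + t • w) =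
        B w w * (t * t) + (2 * B v w) * t + B v v := by
      rw [hadd, haddr, haddr, hsmul, hsmul, hsmulr, hsmulr, hsymm w v]
      ring
    rw [← h0]; exact hnn _
  have h := discrim_le_zero key
  rw [discrim] at h
  nlinarith [h]


abbrev MP3 := MvPolynomial (Fin 3) ℝ

lemma coeff_pderiv (j : Fin 3) (p : MP3) (s : Fin 3 →₀ ℕ) :
    coeff s (pderiv j p) = (s j + 1 : ℝ) * coeff (s + Finsupp.single j 1) p := by
  induction p using MvPolynomial.induction_on' with
  | add p q hp hq => simp [hp, hq, mul_add]
  | monomial t a =>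
    rw [pderiv_monomial, coeff_monomial, coeff_monomial]
    by_cases h0 : t j = 0
    · have hne : ¬ t = s + Finsupp.single j 1 := by
        intro h
        apply absurd h0
        rw [h]; simp
      rw [if_neg hne, h0]
      simp
    · have h1 : Finsupp.single j 1 ≤ t := by
        rw [Finsupp.single_le_iff]; omega
      have hiff : t - Finsupp.single j 1 = s ↔ t = s + Finsupp.single j 1 := by
        constructor
        · intro h; rw [← h, tsub_add_cancel_of_le h1]
        · intro h; rw [h, add_tsub_cancel_right]
      by_cases hc : t = s + Finsupp.single j 1
      · rw [if_pos (hiff.mpr hc), if_pos hc, hc]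
        simp
        ring
      · rw [if_neg (fun h => hc (hiff.mp h)), if_neg hc, mul_zero]

lemma exponent_zero_of_pderiv_eq_zero {p : MP3} {j : Fin 3} (h : pderiv j p = 0)
    {s : Fin 3 →₀ ℕ} (hs : s ∈ p.support) : s j = 0 := by
  by_contra h0
  have h1 : Finsupp.single j 1 ≤ s := by rw [Finsupp.single_le_iff]; omega
  have h2 : coeff (s - Finsupp.single j 1) (pderiv j p) = 0 := by rw [h]; simp
  rw [coeff_pderiv, tsub_add_cancel_of_le h1] at h2
  have hc : coeff s p ≠ 0 := mem_support_iff.mp hs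
  have hpos : ((s - Finsupp.single j 1 : Fin 3 →₀ ℕ) j : ℝ) + 1 ≠ 0 := by positivity
  exact hc ((mul_eq_zero.mp h2).resolve_left hpos)

lemma pderiv_comm (i j : Fin 3) (p : MP3) :
    pderiv i (pderiv j p) = pderiv j (pderiv i p) := by
  induction p using MvPolynomial.induction_on' with
  | add p q hp hq => simp [hp, hq]
  | monomial s a =>
    rcases eq_or_ne i j with rfl | hij
    · rfl
    · rw [pderiv_monomial, pderiv_monomial, pderiv_monomial, pderiv_monomial]
      have he : s - Finsupp.single j 1 - Finsupp.single i 1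
          = s - Finsupp.single i 1 - Finsupp.single j 1 := by
        rw [tsub_tsub, tsub_tsub, add_comm]
      have h1 : (s - Finsupp.single j 1 : Fin 3 →₀ ℕ) i = s i := by
        rw [Finsupp.tsub_apply, Finsupp.single_apply]
        simp [Ne.symm hij]
      have h2 : (s - Finsupp.single i 1 : Fin 3 →₀ ℕ) j = s j := by
        rw [Finsupp.tsub_apply, Finsupp.single_apply]
        simp [hij]
      rw [he, h1, h2]
      ring_nf

lemma totalDegree_pderiv_le (j : Fin 3) (p : MP3) (d : ℕ) (h : p.totalDegree ≤ d + 1) :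
    (pderiv j p).totalDegree ≤ d := by
  conv_lhs => rw [p.as_sum]
  rw [map_sum]
  refine (totalDegree_finset_sum _ _).trans (Finset.sup_le fun s hs => ?_)
  rw [pderiv_monomial]
  by_cases h0 : s j = 0
  · rw [h0]
    simp
  · refine (totalDegree_monomial_le _ _).trans ?_
    have h1 : Finsupp.single j 1 ≤ s := by rw [Finsupp.single_le_iff]; omega
    have hsum : ((s - Finsupp.single j 1).sum fun _ e => e) + 1 = s.sum fun _ e => e := by
      conv_rhs => rw [← tsub_add_cancel_of_le h1]
      rw [Finsupp.sum_add_index' (fun _ => rfl) (fun _ _ _ => rfl)]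
      simp
    have h2 : (s.sum fun _ e => e) ≤ d + 1 := le_trans (le_totalDegree hs) h
    simp only [Function.id_def]
    omega

def antideriv (i : Fin 3) (p : MP3) : MP3 :=
  ∑ s ∈ p.support, monomial (s + Finsupp.single i 1) (p.coeff s / (s i + 1))

lemma pderiv_antideriv (i : Fin 3) (p : MP3) : pderiv i (antideriv i p) = p := by
  rw [antideriv, map_sum]
  conv_rhs => rw [p.as_sum]
  refine Finset.sum_congr rfl fun s hs => ?_
  rw [pderiv_monomial, add_tsub_cancel_right]
  congr 1
  have : (((s + Finsupp.single i 1 : Fin 3 →₀ ℕ) i : ℕ) : ℝ) = (s i : ℝ) + 1 := by simp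
  rw [this, div_mul_cancel₀]
  positivity

lemma pderiv_antideriv_ne {i j : Fin 3} (hne : j ≠ i) (p : MP3) (h : pderiv j p = 0) :
    pderiv j (antideriv i p) = 0 := by
  rw [antideriv, map_sum]
  refine Finset.sum_eq_zero fun s hs => ?_
  rw [pderiv_monomial]
  have h0 : s j = 0 := exponent_zero_of_pderiv_eq_zero h hs
  have : (((s + Finsupp.single i 1 : Fin 3 →₀ ℕ) j : ℕ) : ℝ) = 0 := by
    simp [Finsupp.single_apply, Ne.symm hne, h0]
  rw [this, mul_zero, monomial_zero]

lemma totalDegree_antideriv_le (i : Fin 3) (p : MP3) (d : ℕ) (h : p.totalDegree ≤ d) :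
    (antideriv i p).totalDegree ≤ d + 1 := by
  rw [antideriv]
  refine (totalDegree_finset_sum _ _).trans (Finset.sup_le fun s hs => ?_)
  refine (totalDegree_monomial_le _ _).trans ?_
  have hsum : ((s + Finsupp.single i 1).sum fun _ e => e) = (s.sum fun _ e => e) + 1 := by
    rw [Finsupp.sum_add_index' (fun _ => rfl) (fun _ _ _ => rfl)]
    simp
  have h2 : (s.sum fun _ e => e) ≤ d := le_trans (le_totalDegree hs) h
  simp only [Function.id_def]
  omega

lemma totalDegree_sub_le (p q : MP3) :
    (p - q).totalDegree ≤ max p.totalDegree q.totalDegree := by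
  rw [sub_eq_add_neg]
  refine (totalDegree_add p (-q)).trans ?_
  rw [totalDegree_neg]

lemma poincare (m : ℕ) (v : Fin 3 → MP3) (hdeg : ∀ i, (v i).totalDegree ≤ m)
    (hc : pcurl v = 0) : ∃ p : MP3, p.totalDegree ≤ m + 1 ∧ pgrad p = v := by
  have hsym : ∀ i : Fin 3, pderiv (i + 1) (v (i + 2)) = pderiv (i + 2) (v (i + 1)) :=
    fun i => sub_eq_zero.mp (congrFun hc i)
  have h12 : pderiv 1 (v 2) = pderiv 2 (v 1) := by simpa using hsym 0
  have h20 : pderiv 2 (v 0) = pderiv 0 (v 2) := by simpa using hsym 1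
  have h01 : pderiv 0 (v 1) = pderiv 1 (v 0) := by simpa using hsym 2
  set q1 := antideriv 0 (v 0) with hq1
  have hq1d : q1.totalDegree ≤ m + 1 := totalDegree_antideriv_le _ _ _ (hdeg 0)
  set w : Fin 3 → MP3 := fun i => v i - pderiv i q1 with hw
  have hq1_0 : pderiv 0 q1 = v 0 := by rw [hq1]; exact pderiv_antideriv _ _
  have hw0 : w 0 = 0 := by simp [hw, hq1_0]
  have hwd : ∀ i, (w i).totalDegree ≤ m := by
    intro i
    refine (totalDegree_sub_le _ _).trans (max_le (hdeg i) ?_)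
    exact totalDegree_pderiv_le _ _ _ hq1d
  have hw01 : pderiv 0 (w 1) = 0 := by
    simp only [hw, map_sub, pderiv_comm 0 1 q1, hq1_0, h01, sub_self]
  have hw02 : pderiv 0 (w 2) = 0 := by
    simp only [hw, map_sub, pderiv_comm 0 2 q1, hq1_0, ← h20, sub_self]
  have hw12 : pderiv 1 (w 2) = pderiv 2 (w 1) := by
    simp only [hw, map_sub, h12]
    rw [pderiv_comm 1 2 q1]
  set q2 := antideriv 1 (w 1) with hq2
  have hq2d : q2.totalDegree ≤ m + 1 := totalDegree_antideriv_le _ _ _ (hwd 1)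
  have hq2_0 : pderiv 0 q2 = 0 := pderiv_antideriv_ne (by decide) _ hw01
  have hq2_1 : pderiv 1 q2 = w 1 := pderiv_antideriv _ _
  set u : Fin 3 → MP3 := fun i => w i - pderiv i q2 with hu
  have hu0 : u 0 = 0 := by simp [hu, hw0, hq2_0]
  have hu1 : u 1 = 0 := by simp [hu, hq2_1]
  have hud : (u 2).totalDegree ≤ m := by
    refine (totalDegree_sub_le _ _).trans (max_le (hwd 2) ?_)
    exact totalDegree_pderiv_le _ _ _ hq2d
  have hu2_0 : pderiv 0 (u 2) = 0 := by
    simp only [hu, map_sub, hw02, pderiv_comm 0 2 q2, hq2_0, map_zero, sub_self, sub_zero]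
  have hu2_1 : pderiv 1 (u 2) = 0 := by
    simp only [hu, map_sub, hw12, pderiv_comm 1 2 q2, hq2_1, sub_self]
  set q3 := antideriv 2 (u 2) with hq3
  have hq3d : q3.totalDegree ≤ m + 1 := totalDegree_antideriv_le _ _ _ hud
  have hq3_0 : pderiv 0 q3 = 0 := pderiv_antideriv_ne (by decide) _ hu2_0
  have hq3_1 : pderiv 1 q3 = 0 := pderiv_antideriv_ne (by decide) _ hu2_1
  have hq3_2 : pderiv 2 q3 = u 2 := pderiv_antideriv _ _
  refine ⟨q1 + q2 + q3, ?_, ?_⟩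
  · refine (totalDegree_add _ _).trans (max_le ((totalDegree_add _ _).trans (max_le hq1d hq2d)) hq3d)
  · funext i
    fin_cases i
    · show pderiv 0 (q1 + q2 + q3) = v 0
      simp [map_add, hq2_0, hq3_0, hq1_0]
    · show pderiv 1 (q1 + q2 + q3) = v 1
      have : w 1 = v 1 - pderiv 1 q1 := rfl
      simp [map_add, hq2_1, hq3_1, this]
    · show pderiv 2 (q1 + q2 + q3) = v 2
      have h2 : u 2 = v 2 - pderiv 2 q1 - pderiv 2 q2 := rfl
      simp [map_add, hq3_2, h2]

def shiftP (c : Fin 3 → ℝ) : MP3 →ₐ[ℝ] MP3 := aeval (fun i => X i + C (c i))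

lemma eval_shiftP (c : Fin 3 → ℝ) (y : Fin 3 → ℝ) (p : MP3) :
    eval y (shiftP c p) = eval (fun j => y j + c j) p := by
  induction p using MvPolynomial.induction_on with
  | C a => simp [shiftP]
  | add p q hp hq => simp [map_add, hp, hq]
  | mul_X p i hp =>
    rw [map_mul, eval_mul, hp, eval_mul]
    congr 1
    simp [shiftP]

lemma pderiv_shiftP (c : Fin 3 → ℝ) (i : Fin 3) (p : MP3) :
    pderiv i (shiftP c p) = shiftP c (pderiv i p) := by
  induction p using MvPolynomial.induction_on with
  | C a => simp [shiftP, pderiv_C]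
  | add p q hp hq => simp [map_add, hp, hq]
  | mul_X p j hp =>
    rw [map_mul, pderiv_mul, pderiv_mul, map_add, map_mul]
    rw [hp]
    have h1 : shiftP c (X j) = X j + C (c j) := by simp [shiftP]
    have h2 : pderiv i (X j + C (c j) : MP3) = pderiv i (X j : MP3) := by
      rw [map_add, pderiv_C, add_zero]
    have h3 : shiftP c (pderiv i (X j : MP3)) = pderiv i (X j : MP3) := by
      rcases eq_or_ne j i with rfl | hne
      · simp
      · simp [pderiv_X_of_ne hne]
    rw [h1, h2, map_mul (shiftP c) p (pderiv i (X j)), h3]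

lemma totalDegree_shiftP_le (c : Fin 3 → ℝ) (p : MP3) :
    (shiftP c p).totalDegree ≤ p.totalDegree := by
  conv_lhs => rw [p.as_sum]
  rw [map_sum]
  refine (totalDegree_finset_sum _ _).trans (Finset.sup_le fun s hs => ?_)
  rw [monomial_eq, map_mul]
  refine (totalDegree_mul _ _).trans ?_
  have hC : (shiftP c (C (coeff s p))).totalDegree = 0 := by
    rw [show shiftP c (C (coeff s p)) = C (coeff s p) by simp [shiftP], totalDegree_C]
  rw [hC, zero_add]
  rw [Finsupp.prod, map_prod]
  refine (totalDegree_finset_prod _ _).trans ?_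
  have hfac : ∀ j ∈ s.support, ((shiftP c (X j ^ s j)).totalDegree) ≤ s j := by
    intro j _
    rw [map_pow]
    refine (totalDegree_pow _ _).trans ?_
    have : (shiftP c (X j)).totalDegree ≤ 1 := by
      rw [show shiftP c (X j) = X j + C (c j) by simp [shiftP]]
      refine (totalDegree_add _ _).trans ?_
      simp [totalDegree_X, totalDegree_C]
    calc s j * (shiftP c (X j)).totalDegree ≤ s j * 1 := Nat.mul_le_mul_left _ this
    _ = s j := mul_one _
  refine (Finset.sum_le_sum hfac).trans ?_
  have : ∑ j ∈ s.support, s j = s.sum fun _ e => e := rfl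
  rw [this]
  exact le_totalDegree hs

lemma setIntegral_translate (f : E3 → ℝ) (x₀ : E3) (T : Set E3) :
    ∫ x in T, f x = ∫ y in ((· + x₀) ⁻¹' T), f (y + x₀) :=
  ((measurePreserving_add_right volume x₀).setIntegral_preimage_emb
    (measurableEmbedding_addRight x₀) f T).symm


lemma exists_decomp {M : Type*} [AddCommGroup M] [Module ℝ M]
    (G : Submodule ℝ M) [FiniteDimensional ℝ G] (B : M →ₗ[ℝ] M →ₗ[ℝ] ℝ)
    (hdef : ∀ g ∈ G, B g g = 0 → g = 0) (v : M) :
    ∃ g ∈ G, ∀ w ∈ G, B (v - g) w = 0 := by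
  let φ : ↥G →ₗ[ℝ] Module.Dual ℝ ↥G := B.compl₁₂ G.subtype G.subtype
  have hinj : Function.Injective φ := by
    rw [← LinearMap.ker_eq_bot, Submodule.eq_bot_iff]
    intro g hg
    have h0 : B g g = 0 := by
      have := congrArg (fun f => f g) (LinearMap.mem_ker.mp hg)
      simpa [φ, LinearMap.compl₁₂_apply] using this
    have := hdef g g.2 h0
    exact Subtype.ext this
  have hsurj : Function.Surjective φ :=
    (LinearMap.injective_iff_surjective_of_finrank_eq_finrank
      (Subspace.dual_finrank_eq).symm).mp hinj
  obtain ⟨g, hg⟩ := hsurj ((B v).comp G.subtype)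
  refine ⟨g, g.2, fun w hw => ?_⟩
  have h1 : B (v - (g : M)) w = B v w - B (g : M) w := by
    rw [map_sub]; rfl
  have h2 := congrArg (fun f => f ⟨w, hw⟩) hg
  simp only [φ, LinearMap.compl₁₂_apply, Submodule.coe_subtype, LinearMap.comp_apply] at h2
  rw [h1, h2, sub_self]

lemma normcomp {M : Type*} [AddCommGroup M] [Module ℝ M] [FiniteDimensional ℝ M]
    (B₁ B₂ : M →ₗ[ℝ] M →ₗ[ℝ] ℝ)
    (h₂symm : ∀ v w, B₂ v w = B₂ w v) (h₂nn : ∀ v, 0 ≤ B₂ v v)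
    (h₂def : ∀ v, B₂ v v = 0 → v = 0) :
    ∃ C : ℝ, 0 < C ∧ ∀ v, B₁ v v ≤ C * B₂ v v := by
  letI core : InnerProductSpace.Core ℝ M :=
    { inner := fun v w => B₂ v w
      conj_inner_symm := fun v w => by simpa using h₂symm w v
      re_inner_nonneg := fun v => h₂nn v
      definite := fun v h => h₂def v h
      add_left := fun u v w => by simp [map_add]
      smul_left := fun u v c => by simp }
  letI na : NormedAddCommGroup M := core.toNormedAddCommGroup
  letI ns : NormedSpace ℝ M := InnerProductSpace.Core.toNormedSpace (c := core.toCore)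
  letI ips : InnerProductSpace ℝ M := InnerProductSpace.ofCore core.toCore
  have hB2norm : ∀ v : M, B₂ v v = ‖v‖ ^ 2 := fun v => real_inner_self_eq_norm_sq v
  let L : M →ₗ[ℝ] (M →L[ℝ] ℝ) :=
    (LinearMap.toContinuousLinearMap : (M →ₗ[ℝ] ℝ) ≃ₗ[ℝ] (M →L[ℝ] ℝ)).toLinearMap.comp B₁
  have hLc : Continuous L := L.continuous_of_finiteDimensional
  have hQ1 : Continuous (fun v : M => B₁ v v) := by
    have : Continuous (fun v : M => (L v) v) :=
      isBoundedBilinearMap_apply.continuous.comp (hLc.prodMk continuous_id)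
    exact this
  rcases subsingleton_or_nontrivial M with hM | hM
  · refine ⟨1, one_pos, fun v => ?_⟩
    have hv : v = (0 : M) := Subsingleton.elim v 0
    subst hv
    simp
  · have hsne : (Metric.sphere (0 : M) 1).Nonempty :=
      NormedSpace.sphere_nonempty.mpr zero_le_one
    obtain ⟨u₀, hu₀, hmax⟩ :=
      (isCompact_sphere (0 : M) 1).exists_isMaxOn hsne hQ1.continuousOn
    refine ⟨max (B₁ u₀ u₀) 1, lt_of_lt_of_le one_pos (le_max_right _ _), fun v => ?_⟩
    rcases eq_or_ne v 0 with rfl | hv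
    · simp
    · have hnv : ‖v‖ ≠ 0 := norm_ne_zero_iff.mpr hv
      set u : M := (‖v‖)⁻¹ • v with hu_def
      have hu : u ∈ Metric.sphere (0 : M) 1 := by
        simp [hu_def, norm_smul, abs_of_nonneg (inv_nonneg.mpr (norm_nonneg v)),
          inv_mul_cancel₀ hnv]
      have hscale : B₁ u u = (‖v‖)⁻¹ ^ 2 * B₁ v v := by
        simp [hu_def, _root_.map_smul]
        ring
      have h2 : B₁ u u ≤ max (B₁ u₀ u₀) 1 := le_trans (hmax hu) (le_max_left _ _)
      have h3 : B₁ v v = ‖v‖ ^ 2 * B₁ u u := by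
        rw [hscale]
        field_simp
      rw [h3, hB2norm]
      have hnn : (0:ℝ) ≤ ‖v‖ ^ 2 := sq_nonneg _
      calc ‖v‖ ^ 2 * B₁ u u ≤ ‖v‖ ^ 2 * max (B₁ u₀ u₀) 1 := by
            exact mul_le_mul_of_nonneg_left h2 hnn
      _ = max (B₁ u₀ u₀) 1 * ‖v‖ ^ 2 := mul_comm _ _

lemma pcurl_pgrad (p : MP3) : pcurl (pgrad p) = 0 := by
  funext i
  show pderiv (i+1) (pderiv (i+2) p) - pderiv (i+2) (pderiv (i+1) p) = 0
  rw [pderiv_comm, sub_self]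

lemma shiftP_shiftP_neg (c : Fin 3 → ℝ) (p : MP3) :
    shiftP c (shiftP (fun j => -(c j)) p) = p := by
  induction p using MvPolynomial.induction_on with
  | C a => simp [shiftP]
  | add p q hp hq => simp [map_add, hp, hq]
  | mul_X p j hp =>
    rw [map_mul, map_mul, hp]
    congr 1
    simp [shiftP]

def piEquivW (m : ℕ) :
    ↥(Submodule.pi Set.univ fun _ : Fin 3 => P3 m) ≃ₗ[ℝ] (Fin 3 → ↥(P3 m)) where
  toFun v := fun i => ⟨v.1 i, v.2 i (Set.mem_univ i)⟩
  map_add' a b := rfl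
  map_smul' c a := rfl
  invFun f := ⟨fun i => (f i).1, fun i _ => (f i).2⟩
  left_inv a := rfl
  right_inv f := rfl

instance finDimW (m : ℕ) :
    FiniteDimensional ℝ ↥(Submodule.pi Set.univ fun _ : Fin 3 => P3 m) :=
  Module.Finite.equiv (piEquivW m).symm

def gradL : MP3 →ₗ[ℝ] V3 := LinearMap.pi fun i => (pderiv i).toLinearMap

lemma gradL_apply (p : MP3) : gradL p = pgrad p := rfl

def curlL : V3 →ₗ[ℝ] V3 :=
  LinearMap.pi fun i =>
    ((pderiv (i+1)).toLinearMap.comp (LinearMap.proj (i+2))) -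
      ((pderiv (i+2)).toLinearMap.comp (LinearMap.proj (i+1)))

lemma curlL_apply (v : V3) : curlL v = pcurl v := rfl

def Bform (S : Set E3) (hS : Bornology.IsBounded S) : V3 →ₗ[ℝ] V3 →ₗ[ℝ] ℝ :=
  LinearMap.mk₂ ℝ (ip S) (fun u v w => ip_add_left hS u v w)
    (fun c v w => ip_smul_left S c v w)
    (fun u v w => by rw [ip_symm S u (v + w), ip_add_left hS, ip_symm S v u, ip_symm S w u])
    (fun c u v => by rw [ip_symm S u (c • v), ip_smul_left, ip_symm S v u, smul_eq_mul])

lemma Bform_apply (S : Set E3) (hS : Bornology.IsBounded S) (v w : V3) :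
    Bform S hS v w = ip S v w := rfl

lemma sqL2_eq_ip (T : Set E3) (v : V3) : sqL2 T v = ip T v v := by
  unfold sqL2 ip ipf
  congr 1
  funext x
  refine Finset.sum_congr rfl fun i _ => ?_
  rw [pow_two]
  rfl

set_option maxHeartbeats 2000000 in
lemma centered (ℓ : ℕ) (ρ : ℝ) (hρ : 0 < ρ) :
    ∃ C : ℝ, 0 < C ∧ ∀ T₀ : Set E3, IsOpen T₀ →
      Metric.ball (0:E3) ρ ⊆ T₀ → T₀ ⊆ Metric.ball (0:E3) 1 →
      ∀ r : V3, (∀ i, r i ∈ P3 (ℓ+1)) → (∀ w ∈ Gspace (ℓ+1), ip T₀ r w = 0) →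
        ip T₀ r r ≤ C * ip T₀ (pcurl r) (pcurl r) := by
  set m := ℓ + 1 with hm
  set Wsub : Submodule ℝ V3 := Submodule.pi Set.univ fun _ : Fin 3 => P3 m with hWsub
  have hb1 : Bornology.IsBounded (Metric.ball (0:E3) 1) := Metric.isBounded_ball
  have hbρ : Bornology.IsBounded (Metric.ball (0:E3) ρ) := Metric.isBounded_ball
  set B1 := Bform (Metric.ball (0:E3) 1) hb1 with hB1
  set Bρ := Bform (Metric.ball (0:E3) ρ) hbρ with hBρ
  have hdef1 : ∀ v : V3, ip (Metric.ball (0:E3) 1) v v = 0 → v = 0 := by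
    intro v h
    by_contra hv
    exact absurd h (ne_of_gt (ip_diag_pos Metric.isOpen_ball
      (Metric.nonempty_ball.mpr one_pos) hb1 hv))
  have hdefρ : ∀ v : V3, ip (Metric.ball (0:E3) ρ) v v = 0 → v = 0 := by
    intro v h
    by_contra hv
    exact absurd h (ne_of_gt (ip_diag_pos Metric.isOpen_ball
      (Metric.nonempty_ball.mpr hρ) hbρ hv))
  set G' : Submodule ℝ V3 := (P3 (m+1)).map gradL with hG'
  have hG'W : G' ≤ Wsub := by
    rintro v ⟨p, hp, rfl⟩
    intro i _
    rw [SetLike.mem_coe, MvPolynomial.mem_restrictTotalDegree]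
    exact totalDegree_pderiv_le i p m ((MvPolynomial.mem_restrictTotalDegree _ _ _).mp hp)
  haveI : FiniteDimensional ℝ ↥G' := Submodule.finiteDimensional_of_le hG'W
  have hGspace : Gspace m = (G' : Set V3) := by
    ext v
    constructor
    · rintro ⟨p, hp, rfl⟩; exact ⟨p, hp, rfl⟩
    · rintro ⟨p, hp, rfl⟩; exact ⟨p, hp, rfl⟩
  set K : Submodule ℝ V3 :=
    Wsub ⊓ (⨅ w : ↥G', LinearMap.ker (B1.flip (w : V3))) with hK
  have hKmem : ∀ v : V3, v ∈ K ↔ (v ∈ Wsub ∧ ∀ w ∈ G', ip (Metric.ball (0:E3) 1) v w = 0) := by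
    intro v
    rw [hK, Submodule.mem_inf]
    constructor
    · rintro ⟨h1, h2⟩
      refine ⟨h1, fun w hw => ?_⟩
      have := Submodule.mem_iInf _ |>.mp h2 ⟨w, hw⟩
      exact LinearMap.mem_ker.mp this
    · rintro ⟨h1, h2⟩
      exact ⟨h1, Submodule.mem_iInf _ |>.mpr fun w => LinearMap.mem_ker.mpr (h2 w w.2)⟩
  haveI : FiniteDimensional ℝ ↥K := Submodule.finiteDimensional_of_le inf_le_left
  -- F1 : on Wsub, ball-1 norm ≤ c1 * ball-ρ norm
  obtain ⟨c1, hc1, hF1⟩ := normcomp (M := ↥Wsub)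
    (B1.compl₁₂ Wsub.subtype Wsub.subtype) (Bρ.compl₁₂ Wsub.subtype Wsub.subtype)
    (fun v w => ip_symm _ _ _) (fun v => ip_diag_nonneg _)
    (fun v h => Subtype.ext (hdefρ _ h))
  -- F2 : on K, ball-1 norm ≤ c2 * ball-1 norm of curl
  obtain ⟨c2, hc2, hF2⟩ := normcomp (M := ↥K)
    (B1.compl₁₂ K.subtype K.subtype)
    ((B1.compl₁₂ curlL curlL).compl₁₂ K.subtype K.subtype)
    (fun v w => ip_symm _ _ _) (fun v => ip_diag_nonneg _)
    (fun v h => by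
      have hcurl0 : pcurl (v : V3) = 0 := by
        rw [← curlL_apply]
        exact hdef1 _ h
      obtain ⟨hW, hperp⟩ := (hKmem (v : V3)).mp v.2
      have hdeg : ∀ i, ((v : V3) i).totalDegree ≤ m := fun i =>
        (MvPolynomial.mem_restrictTotalDegree _ _ _).mp (hW i (Set.mem_univ i))
      obtain ⟨p, hpd, hpg⟩ := poincare m (v : V3) hdeg hcurl0
      have hvG : (v : V3) ∈ G' :=
        ⟨p, (MvPolynomial.mem_restrictTotalDegree _ _ _).mpr hpd, by rw [gradL_apply, hpg]⟩
      exact Subtype.ext (hdef1 _ (hperp _ hvG)))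
  refine ⟨c2 * c1, by positivity, ?_⟩
  intro T₀ hT₀o hball hsub r hrP hrperp
  have hT₀b : Bornology.IsBounded T₀ := hb1.subset hsub
  have hrW : r ∈ Wsub := fun i _ => hrP i
  obtain ⟨g, hgG, hperp⟩ := exists_decomp G' B1 (fun g _ h => hdef1 g h) r
  set s : V3 := r - g with hs
  have hsK : s ∈ K := (hKmem s).mpr ⟨Wsub.sub_mem hrW (hG'W hgG), hperp⟩
  have hrg0 : ip T₀ r g = 0 := hrperp g (by rw [hGspace]; exact hgG)
  have ha : ip T₀ r r ≤ ip T₀ s s := by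
    have h1 : ip T₀ r s = ip T₀ r r - ip T₀ r g := by
      rw [ip_symm T₀ r s, hs, ip_sub_left hT₀b, ip_symm T₀ r r, ip_symm T₀ g r]
    rw [hrg0, sub_zero] at h1
    have hcs := cauchy_schwarz_aux (B := ip T₀) (ip_symm T₀) (ip_add_left hT₀b)
      (ip_smul_left T₀) (fun v => ip_diag_nonneg v) r s
    rw [h1] at hcs
    nlinarith [ip_diag_nonneg (S := T₀) r, ip_diag_nonneg (S := T₀) s]
  have hb : ip T₀ s s ≤ ip (Metric.ball (0:E3) 1) s s := ip_diag_mono hsub hb1 s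
  have hc : ip (Metric.ball (0:E3) 1) s s
      ≤ c2 * ip (Metric.ball (0:E3) 1) (pcurl s) (pcurl s) := by
    have := hF2 ⟨s, hsK⟩
    simpa [hB1, LinearMap.compl₁₂_apply, Bform_apply, curlL_apply] using this
  have hd : pcurl s = pcurl r := by
    obtain ⟨p, hp, rfl⟩ := hgG
    rw [hs, ← curlL_apply, map_sub, curlL_apply, curlL_apply, gradL_apply, pcurl_pgrad, sub_zero]
  have hcurlW : pcurl r ∈ Wsub := by
    intro i _
    rw [SetLike.mem_coe, MvPolynomial.mem_restrictTotalDegree]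
    show (pderiv (i+1) (r (i+2)) - pderiv (i+2) (r (i+1))).totalDegree ≤ m
    refine (totalDegree_sub_le _ _).trans (max_le ?_ ?_) <;>
      exact totalDegree_pderiv_le _ _ _
        (le_trans ((MvPolynomial.mem_restrictTotalDegree _ _ _).mp (hrP _)) (Nat.le_succ m))
  have he : ip (Metric.ball (0:E3) 1) (pcurl r) (pcurl r)
      ≤ c1 * ip (Metric.ball (0:E3) ρ) (pcurl r) (pcurl r) := by
    have := hF1 ⟨pcurl r, hcurlW⟩
    simpa [hB1, hBρ, LinearMap.compl₁₂_apply, Bform_apply] using this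
  have hf : ip (Metric.ball (0:E3) ρ) (pcurl r) (pcurl r) ≤ ip T₀ (pcurl r) (pcurl r) :=
    ip_diag_mono hball hT₀b _
  calc ip T₀ r r ≤ ip T₀ s s := ha
  _ ≤ ip (Metric.ball (0:E3) 1) s s := hb
  _ ≤ c2 * ip (Metric.ball (0:E3) 1) (pcurl s) (pcurl s) := hc
  _ = c2 * ip (Metric.ball (0:E3) 1) (pcurl r) (pcurl r) := by rw [hd]
  _ ≤ c2 * (c1 * ip (Metric.ball (0:E3) ρ) (pcurl r) (pcurl r)) :=
      mul_le_mul_of_nonneg_left he (le_of_lt hc2)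
  _ ≤ c2 * (c1 * ip T₀ (pcurl r) (pcurl r)) :=
      mul_le_mul_of_nonneg_left (mul_le_mul_of_nonneg_left hf (le_of_lt hc1)) (le_of_lt hc2)
  _ = c2 * c1 * ip T₀ (pcurl r) (pcurl r) := by ring

set_option maxHeartbeats 2000000 in
theorem stmt3 (ℓ : ℕ) (ρ : ℝ) (hρ : 0 < ρ) :
    ∃ C : ℝ, 0 < C ∧
      ∀ (T : Set (EuclideanSpace ℝ (Fin 3))) (x₀ : EuclideanSpace ℝ (Fin 3)),
        IsOpen T → T.Nonempty → Bornology.IsBounded T → Metric.diam T = 1 →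
        Metric.ball x₀ ρ ⊆ T → T ⊆ Metric.ball x₀ 1 →
        ∀ r ∈ GspacePerp T (ℓ + 1),
          Real.sqrt (sqL2 T r) ≤ C * Real.sqrt (sqL2 T (pcurl r)) := by
  obtain ⟨C, hC, hmain⟩ := centered ℓ ρ hρ
  refine ⟨Real.sqrt C, Real.sqrt_pos.mpr hC, ?_⟩
  intro T x₀ hTo hTne hTb hdiam hball hsub r hr
  obtain ⟨hrP, hrperp⟩ := hr
  set c : Fin 3 → ℝ := fun j => x₀ j with hcdef
  set rt : V3 := fun i => shiftP c (r i) with hrt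
  set T₀ : Set E3 := (· + x₀) ⁻¹' T with hT₀
  have hT₀o : IsOpen T₀ := hTo.preimage (continuous_id.add continuous_const)
  have hdist : ∀ y : E3, dist (y + x₀) x₀ = dist y 0 := by
    intro y
    have := dist_add_right y 0 x₀
    rwa [zero_add] at this
  have hball₀ : Metric.ball (0:E3) ρ ⊆ T₀ := by
    intro y hy
    have h1 : dist (y + x₀) x₀ < ρ := by rw [hdist]; exact Metric.mem_ball.mp hy
    exact Set.mem_preimage.mpr (hball (Metric.mem_ball.mpr h1))
  have hsub₀ : T₀ ⊆ Metric.ball (0:E3) 1 := by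
    intro y hy
    have h2 : dist (y + x₀) x₀ < 1 := Metric.mem_ball.mp (hsub (Set.mem_preimage.mp hy))
    rw [hdist] at h2
    exact Metric.mem_ball.mpr h2
  have heval : ∀ (p : MP3) (y : E3), evalE (shiftP c p) y = evalE p (y + x₀) := by
    intro p y
    unfold evalE
    rw [eval_shiftP]
    rfl
  have htrans : ∀ v w : V3,
      ip T v w = ip T₀ (fun i => shiftP c (v i)) (fun i => shiftP c (w i)) := by
    intro v w
    unfold ip
    rw [setIntegral_translate (ipf v w) x₀ T]
    congr 1
    funext y
    unfold ipf
    refine (Finset.sum_congr rfl fun i _ => ?_).symm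
    rw [heval, heval]
  have hrtP : ∀ i, rt i ∈ P3 (ℓ+1) := by
    intro i
    rw [hrt, MvPolynomial.mem_restrictTotalDegree]
    exact le_trans (totalDegree_shiftP_le _ _)
      ((MvPolynomial.mem_restrictTotalDegree _ _ _).mp (hrP i))
  have hperp₀ : ∀ w ∈ Gspace (ℓ+1), ip T₀ rt w = 0 := by
    rintro w ⟨p, hp, rfl⟩
    set p'' : MP3 := shiftP (fun j => -(c j)) p with hp''
    have hdeg'' : p'' ∈ P3 (ℓ+1+1) := by
      rw [hp'', MvPolynomial.mem_restrictTotalDegree]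
      exact le_trans (totalDegree_shiftP_le _ _)
        ((MvPolynomial.mem_restrictTotalDegree _ _ _).mp hp)
    have hshift : (fun i => shiftP c (pgrad p'' i)) = pgrad p := by
      funext i
      show shiftP c (pderiv i p'') = pderiv i p
      rw [hp'', ← pderiv_shiftP, shiftP_shiftP_neg]
    have h0 : ip T r (pgrad p'') = 0 := hrperp _ ⟨p'', hdeg'', rfl⟩
    calc ip T₀ rt (pgrad p)
        = ip T₀ (fun i => shiftP c (r i)) (fun i => shiftP c (pgrad p'' i)) := by
          rw [hshift, hrt]
    _ = ip T r (pgrad p'') := (htrans r (pgrad p'')).symm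
    _ = 0 := h0
  have hcurlrt : pcurl rt = fun i => shiftP c (pcurl r i) := by
    funext i
    show pderiv (i+1) (shiftP c (r (i+2))) - pderiv (i+2) (shiftP c (r (i+1)))
        = shiftP c (pderiv (i+1) (r (i+2)) - pderiv (i+2) (r (i+1)))
    rw [pderiv_shiftP, pderiv_shiftP, map_sub]
  have h1 : sqL2 T r = ip T₀ rt rt := by rw [sqL2_eq_ip, htrans r r]
  have h2 : sqL2 T (pcurl r) = ip T₀ (pcurl rt) (pcurl rt) := by
    rw [sqL2_eq_ip, htrans (pcurl r) (pcurl r), hcurlrt]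
  have hfin := hmain T₀ hT₀o hball₀ hsub₀ rt hrtP hperp₀
  rw [← h1, ← h2] at hfin
  have hs1 : Real.sqrt (sqL2 T r) ≤ Real.sqrt (C * sqL2 T (pcurl r)) :=
    Real.sqrt_le_sqrt hfin
  rw [Real.sqrt_mul (le_of_lt hC)] at hs1
  exact hs1
end
end
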